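/- Transfinite induction up to ω^β follows from transfinite induction up to β via the jump: for any family of classes, if for every class U, progressiveness of U implies all ordinals < β are in U^J, then for every progressive class V, all ordinals < ω^β are in V. -/

import Mathlib

open Ordinal

def Progressive (U : Ordinal → Prop) : Prop :=
  ∀ α : Ordinal, (∀ γ < α, U γ) → U α

def Jump (U : Ordinal → Prop) (β : Ordinal) : Prop :=
  ∀ α : Ordinal, (∀ γ < α, U γ) → ∀ γ < α + (ω : Ordinal) ^ β, U γ

/-- Transfinite induction up to `ω^β` follows from transfinite induction up to
`β` via the jump. -/
theorem TI_opow_of_TI_jump (β : Ordinal)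
    (h : ∀ U : Ordinal → Prop, Progressive U → ∀ γ < β, Jump U γ) :
    ∀ V : Ordinal → Prop, Progressive V → ∀ δ < (ω : Ordinal) ^ β, V δ := by
  intro V hV δ hδ
  have hJ : ∀ γ < β, Jump V γ := h V hV
  have key : ∀ γ < β, ∀ n : ℕ, ∀ x < (ω : Ordinal) ^ γ * n, V x := by
    intro γ hγ n
    induction n with
    | zero => simp
    | succ n ih =>
      intro x hx
      apply hJ γ hγ ((ω : Ordinal) ^ γ * n) ih x
      calc x < (ω : Ordinal) ^ γ * (n + 1 : ℕ) := hx
        _ = (ω : Ordinal) ^ γ * n + (ω : Ordinal) ^ γ := by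
            push_cast; rw [mul_add_one]
  rcases eq_or_ne δ 0 with rfl | hδ0
  · exact hV 0 (by simp)
  · have hγ : log ω δ < β := (lt_opow_iff_log_lt one_lt_omega0 hδ0).mp hδ
    have h2 : δ < (ω : Ordinal) ^ log ω δ * ω := by
      rw [← opow_succ]
      exact lt_opow_succ_log_self one_lt_omega0 δ
    obtain ⟨c, hc, hδc⟩ := (lt_mul_iff_of_isSuccLimit isSuccLimit_omega0).mp h2
    obtain ⟨n, rfl⟩ := lt_omega0.mp hc
    exact key _ hγ n δ hδc
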